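/- Every Banach space over ℝ with the Schur property is hereditarily-ℓ¹: if X has the Schur property, then every infinite-dimensional closed subspace of X contains a closed subspace topologically isomorphic to ℓ¹. -/

import Mathlib

open Filter Topology

section Defs

variable {E : Type*} [NormedAddCommGroup E] [NormedSpace ℝ E]
variable {F : Type*} [NormedAddCommGroup F] [NormedSpace ℝ F]

/-- A sequence converges weakly to `x₀`. -/
def WeakConvTo (x : ℕ → E) (x₀ : E) : Prop :=
  ∀ f : E →L[ℝ] ℝ, Tendsto (fun n => f (x n)) atTop (𝓝 (f x₀))

/-- A sequence is weakly Cauchy. -/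
def WeaklyCauchySeq (x : ℕ → E) : Prop :=
  ∀ f : E →L[ℝ] ℝ, ∃ L : ℝ, Tendsto (fun n => f (x n)) atTop (𝓝 L)

/-- Every bounded sequence has a weakly Cauchy subsequence. -/
def AlmostReflexive (E : Type*) [NormedAddCommGroup E] [NormedSpace ℝ E] : Prop :=
  ∀ x : ℕ → E, (∃ C : ℝ, ∀ n, ‖x n‖ ≤ C) →
    ∃ φ : ℕ → ℕ, StrictMono φ ∧ WeaklyCauchySeq (x ∘ φ)

/-- Every weakly convergent sequence converges in norm. -/
def SchurProperty (E : Type*) [NormedAddCommGroup E] [NormedSpace ℝ E] : Prop :=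
  ∀ (x : ℕ → E) (x₀ : E), WeakConvTo x x₀ → Tendsto x atTop (𝓝 x₀)

/-- Sequential reflexivity: every bounded sequence has a weakly convergent subsequence. -/
def SeqReflexive (E : Type*) [NormedAddCommGroup E] [NormedSpace ℝ E] : Prop :=
  ∀ x : ℕ → E, (∃ C : ℝ, ∀ n, ‖x n‖ ≤ C) →
    ∃ φ : ℕ → ℕ, StrictMono φ ∧ ∃ x₀ : E, WeakConvTo (x ∘ φ) x₀

/-- Every weakly Cauchy sequence converges weakly. -/
def WeaklySeqComplete (E : Type*) [NormedAddCommGroup E] [NormedSpace ℝ E] : Prop :=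
  ∀ x : ℕ → E, WeaklyCauchySeq x → ∃ x₀ : E, WeakConvTo x x₀

/-- No infinite-dimensional closed subspace is (sequentially) reflexive. -/
def VeryIrreflexive (E : Type*) [NormedAddCommGroup E] [NormedSpace ℝ E] : Prop :=
  ∀ X₀ : Subspace ℝ E, IsClosed (X₀ : Set E) → ¬FiniteDimensional ℝ X₀ →
    ¬SeqReflexive X₀

/-- A strictly singular bounded operator: on no infinite-dimensional closed subspace is it
an isomorphism onto its image. -/
def StrictlySingular (T : E →L[ℝ] F) : Prop :=
  ∀ X₀ : Subspace ℝ E, IsClosed (X₀ : Set E) → ¬FiniteDimensional ℝ X₀ →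
    ¬∃ c : ℝ, 0 < c ∧ ∀ x ∈ X₀, c * ‖x‖ ≤ ‖T x‖

/-- A weakly compact operator. -/
def WeaklyCompactOp (T : E →L[ℝ] F) : Prop :=
  ∀ x : ℕ → E, (∃ C : ℝ, ∀ n, ‖x n‖ ≤ C) →
    ∃ φ : ℕ → ℕ, StrictMono φ ∧ ∃ y : F, WeakConvTo (fun n => T (x (φ n))) y

/-- A completely continuous operator maps weakly convergent sequences to norm convergent ones. -/
def CompletelyContinuousOp (T : E →L[ℝ] F) : Prop :=
  ∀ (x : ℕ → E) (x₀ : E), WeakConvTo x x₀ → ∃ y : F, Tendsto (fun n => T (x n)) atTop (𝓝 y)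

/-- The image of the closed unit ball is relatively compact in norm. -/
def CompactOp (T : E →L[ℝ] F) : Prop :=
  IsCompact (closure (⇑T '' Metric.closedBall (0 : E) 1))

/-- The Dunford–Pettis property. -/
def DunfordPettisProp (E : Type*) [NormedAddCommGroup E] [NormedSpace ℝ E] : Prop :=
  ∀ (Z : Type*) [NormedAddCommGroup Z] [NormedSpace ℝ Z] [CompleteSpace Z],
    ∀ T : E →L[ℝ] Z, WeaklyCompactOp T → CompletelyContinuousOp T

/-- The reciprocal Dunford–Pettis property. -/
def ReciprocalDunfordPettisProp (E : Type*) [NormedAddCommGroup E] [NormedSpace ℝ E] : Prop :=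
  ∀ (Z : Type*) [NormedAddCommGroup Z] [NormedSpace ℝ Z] [CompleteSpace Z],
    ∀ T : E →L[ℝ] Z, CompletelyContinuousOp T → WeaklyCompactOp T

/-- The Dieudonné property. -/
def DieudonneProp (E : Type*) [NormedAddCommGroup E] [NormedSpace ℝ E] : Prop :=
  ∀ (Z : Type*) [NormedAddCommGroup Z] [NormedSpace ℝ Z] [CompleteSpace Z],
    ∀ T : E →L[ℝ] Z,
      (∀ x : ℕ → E, WeaklyCauchySeq x → ∃ y : Z, WeakConvTo (fun n => T (x n)) y) →
      WeaklyCompactOp T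

/-- A Grothendieck space: weak*-convergent sequences in the dual converge weakly. -/
def GrothendieckSpace (E : Type*) [NormedAddCommGroup E] [NormedSpace ℝ E] : Prop :=
  ∀ (f : ℕ → (E →L[ℝ] ℝ)) (g : E →L[ℝ] ℝ),
    (∀ x : E, Tendsto (fun n => f n x) atTop (𝓝 (g x))) →
    ∀ F : (E →L[ℝ] ℝ) →L[ℝ] ℝ, Tendsto (fun n => F (f n)) atTop (𝓝 (F g))

/-- The Banach space ℓ¹ of absolutely summable real sequences. -/
abbrev EllOne : Type := lp (fun _ : ℕ => ℝ) 1

/-- Quasi-reflexive: the canonical image of `E` in its bidual has finite codimension. -/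
def QuasiReflexive (E : Type*) [NormedAddCommGroup E] [NormedSpace ℝ E] : Prop :=
  FiniteDimensional ℝ
    ((StrongDual ℝ (StrongDual ℝ E)) ⧸
      LinearMap.range (NormedSpace.inclusionInDoubleDual ℝ E).toLinearMap)

/-- Hereditarily-ℓ¹: every infinite-dimensional closed subspace contains a closed subspace
topologically isomorphic to ℓ¹. -/
def HereditarilyEllOne (E : Type*) [NormedAddCommGroup E] [NormedSpace ℝ E] : Prop :=
  ∀ X₀ : Subspace ℝ E, IsClosed (X₀ : Set E) → ¬FiniteDimensional ℝ X₀ →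
    ∃ Z : Subspace ℝ E, Z ≤ X₀ ∧ IsClosed (Z : Set E) ∧ Nonempty (Z ≃L[ℝ] EllOne)

end Defs


section Core

variable {D : Type*} (v : ℕ → D → ℝ) (r s : ℝ)

/-- `f` oscillates across `(r,s)` on the infinite index set `M`. -/
def Osc (f : D) (M : Set ℕ) : Prop :=
  {n ∈ M | v n f < r}.Infinite ∧ {n ∈ M | s < v n f}.Infinite

/-- Every infinite subset of `M` has an oscillating point in `C`. -/
def Pd (M : Set ℕ) (C : Set D) : Prop :=
  ∀ M' ⊆ M, M'.Infinite → ∃ f ∈ C, Osc v r s f M'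

variable {v r s}

lemma Osc.mono {f : D} {M M' : Set ℕ} (h : M ⊆ M') (hf : Osc v r s f M) :
    Osc v r s f M' := by
  refine ⟨hf.1.mono ?_, hf.2.mono ?_⟩ <;> exact fun n hn => ⟨h hn.1, hn.2⟩

lemma Osc.inter {f : D} {M N : Set ℕ} (hfin : (M \ N).Finite) (hf : Osc v r s f M) :
    Osc v r s f (M ∩ N) := by
  constructor
  · refine ((hf.1.diff hfin).mono ?_)
    rintro n ⟨⟨hM, hv⟩, hn⟩
    exact ⟨⟨hM, by_contra fun hN => hn ⟨hM, hN⟩⟩, hv⟩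
  · refine ((hf.2.diff hfin).mono ?_)
    rintro n ⟨⟨hM, hv⟩, hn⟩
    exact ⟨⟨hM, by_contra fun hN => hn ⟨hM, hN⟩⟩, hv⟩

lemma Pd.mono_set {M M' : Set ℕ} {C : Set D} (h : M' ⊆ M) (hP : Pd v r s M C) :
    Pd v r s M' C := fun M'' hM'' hinf => hP M'' (hM''.trans h) hinf

lemma Pd.mono_C {M : Set ℕ} {C C' : Set D} (h : C ⊆ C') (hP : Pd v r s M C) :
    Pd v r s M C' := fun M'' hM'' hinf => by
  obtain ⟨f, hf, hosc⟩ := hP M'' hM'' hinf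
  exact ⟨f, h hf, hosc⟩

/-- Failure of `Pd` yields a hereditarily bad subset. -/
lemma not_Pd {M : Set ℕ} {C : Set D} (h : ¬ Pd v r s M C) :
    ∃ M' ⊆ M, M'.Infinite ∧ ∀ M'' ⊆ M', M''.Infinite → ∀ f ∈ C, ¬ Osc v r s f M'' := by
  simp only [Pd, not_forall] at h
  obtain ⟨M', hM', hinf, hbad⟩ := h
  push_neg at hbad
  exact ⟨M', hM', hinf, fun M'' hM'' _ f hf hosc => hbad f hf (hosc.mono hM'')⟩

/-- Sequential processing of a list of cells. -/
lemma list_lemma (L : List (Set D)) {M : Set ℕ} (hM : M.Infinite) :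
    (∃ M' ⊆ M, M'.Infinite ∧ ∀ C ∈ L, Pd v r s M' C) ∨
    (∃ C ∈ L, ∃ M' ⊆ M, M'.Infinite ∧
      ∀ M'' ⊆ M', M''.Infinite → ∀ f ∈ C, ¬ Osc v r s f M'') := by
  induction L generalizing M with
  | nil => exact Or.inl ⟨M, subset_rfl, hM, by simp⟩
  | cons C L ih =>
    by_cases hC : ∃ M₁ ⊆ M, M₁.Infinite ∧ Pd v r s M₁ C
    · obtain ⟨M₁, hM₁, hinf₁, hP₁⟩ := hC
      rcases ih hinf₁ with ⟨M', hM', hinf', hall⟩ | ⟨C', hC', bad⟩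
      · refine Or.inl ⟨M', hM'.trans hM₁, hinf', ?_⟩
        intro C' hC'
        rcases List.mem_cons.1 hC' with h | h
        · exact h ▸ hP₁.mono_set hM'
        · exact hall C' h
      · obtain ⟨M', hM', rest⟩ := bad
        exact Or.inr ⟨C', List.mem_cons_of_mem _ hC', M', hM'.trans hM₁, rest⟩
    · push_neg at hC
      have : ¬ Pd v r s M C := fun h => (hC M subset_rfl hM) h
      obtain ⟨M', hM', hinf, hbad⟩ := not_Pd this
      exact Or.inr ⟨C, List.mem_cons_self, M', hM', hinf, hbad⟩

end Core

section Multi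

variable {D : Type*} {v : ℕ → D → ℝ} {r s : ℝ}

/-- The side set. -/
def XS (v : ℕ → D → ℝ) (r s : ℝ) (b : Bool) (n : ℕ) : Set D :=
  if b then {f | s < v n f} else {f | v n f < r}

/-- Hereditarily bad. -/
def Bad (v : ℕ → D → ℝ) (r s : ℝ) (n : ℕ) (C : Set D) (A : Set ℕ) : Prop :=
  ∀ M₃ ⊆ A, M₃.Infinite → ∀ f ∈ C, ¬ Osc v r s f M₃

lemma multicell {ι : Type} [Fintype ι] (Cs : ι → Set D) {M : Set ℕ} (hM : M.Infinite)
    (hP : ∀ i, Pd v r s M (Cs i)) (N : ℕ) :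
    ∃ n ∈ M, N ≤ n ∧ ∃ M' ⊆ M, M'.Infinite ∧
      ∀ (i : ι) (b : Bool), Pd v r s M' (Cs i ∩ XS v r s b n) := by
  by_contra hcon
  push_neg at hcon
  -- per-element extraction
  have perel : ∀ n ∈ M, N ≤ n → ∀ Mb ⊆ M, Mb.Infinite →
      ∃ (p : ι × Bool) (A : Set ℕ), A ⊆ Mb ∧ A.Infinite ∧
        Bad v r s n (Cs p.1 ∩ XS v r s p.2 n) A := by
    intro n hn hNn Mb hMb hMbinf
    have := list_lemma (v := v) (r := r) (s := s)
      (((Finset.univ : Finset (ι × Bool)).toList).map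
        (fun p => Cs p.1 ∩ XS v r s p.2 n)) hMbinf
    rcases this with ⟨M', hM', hinf', hall⟩ | ⟨C, hC, M', hM', hinf', hbad⟩
    · exfalso
      have hsubM : M' ⊆ M := fun t ht => hMb (hM' ht)
      obtain ⟨i, b, hnot⟩ := hcon n hn hNn M' hsubM hinf'
      exact hnot (hall _ (List.mem_map.2 ⟨(i, b), by simp, rfl⟩))
    · obtain ⟨p, -, rfl⟩ := List.mem_map.1 hC
      exact ⟨p, M', fun t ht => hM' ht, hinf', hbad⟩
  -- choice functions
  have step : ∀ (m : ℕ) (A : Set ℕ), A ⊆ M → A.Infinite →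
      ∃ (n : ℕ) (p : ι × Bool) (A' : Set ℕ), n ∈ A ∧ m < n ∧ N ≤ n ∧ A' ⊆ A ∧ A'.Infinite ∧
        Bad v r s n (Cs p.1 ∩ XS v r s p.2 n) A' := by
    intro m A hA hAinf
    obtain ⟨n, hnA, hn⟩ := hAinf.exists_gt (max m N)
    obtain ⟨p, A', hA', hA'inf, hbad⟩ :=
      perel n (hA hnA) (le_of_lt (lt_of_le_of_lt (le_max_right m N) hn)) A hA hAinf
    exact ⟨n, p, A', hnA, lt_of_le_of_lt (le_max_left m N) hn, 
      le_of_lt (lt_of_le_of_lt (le_max_right m N) hn), hA', hA'inf, hbad⟩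
  choose nF pF AF hmem hlt hNle hsub hinf hbadF using step
  -- iterate
  let St := {q : ℕ × Set ℕ // q.2 ⊆ M ∧ q.2.Infinite}
  let next : St → St := fun q =>
    ⟨(nF q.1.1 q.1.2 q.2.1 q.2.2, AF q.1.1 q.1.2 q.2.1 q.2.2),
      (hsub q.1.1 q.1.2 q.2.1 q.2.2).trans q.2.1, hinf q.1.1 q.1.2 q.2.1 q.2.2⟩
  let g : ℕ → St := fun k => next^[k+1] ⟨(0, M), subset_rfl, hM⟩
  have hg : ∀ k, g (k+1) = next (g k) := by
    intro k
    show next^[k+2] _ = next (next^[k+1] _)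
    rw [Function.iterate_succ_apply']
  -- components
  let nn : ℕ → ℕ := fun k => (g k).1.1
  let AA : ℕ → Set ℕ := fun k => (g k).1.2
  let pp : ℕ → ι × Bool := fun k =>
    pF (g k).1.1 (g k).1.2 (g k).2.1 (g k).2.2
  
  have hAAsub : ∀ k, AA k ⊆ M := fun k => (g k).2.1
  have hAAinf : ∀ k, (AA k).Infinite := fun k => (g k).2.2
  have hnnM : ∀ k, nn k ∈ M := by
    intro k
    cases k with
    | zero => exact hmem 0 M subset_rfl hM
    | succ k =>
      have : nn (k+1) ∈ AA k := by
        have := hg k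
        simp only [nn, this, next]
        exact hmem _ _ _ _
      exact hAAsub k this
  have hnnAA : ∀ k, nn (k+1) ∈ AA k := by
    intro k
    have := hg k
    simp only [nn, this, next]
    exact hmem _ _ _ _
  have hnnlt : ∀ k, nn k < nn (k+1) := by
    intro k
    have := hg k
    simp only [nn, this, next]
    exact hlt _ _ _ _
  have hAAmono : ∀ k, AA (k+1) ⊆ AA k := by
    intro k
    have := hg k
    simp only [AA, this, next]
    exact hsub _ _ _ _
  have hbadk : ∀ k, Bad v r s (nn (k+1))
      (Cs (pp k).1 ∩ XS v r s (pp k).2 (nn (k+1))) (AA (k+1)) := by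
    intro k
    have := hg k
    simp only [nn, AA, pp, this, next]
    exact hbadF _ _ _ _
  have hnnmono : StrictMono nn := strictMono_nat_of_lt_succ hnnlt
  have hAAle : ∀ {j k}, k ≤ j → AA j ⊆ AA k := by
    intro j k h
    exact antitone_nat_of_succ_le hAAmono h
  have hnnin : ∀ {j k}, k < j → nn j ∈ AA k := by
    intro j k h
    obtain ⟨j', rfl⟩ := Nat.exists_eq_add_of_lt h
    have : nn (k + j' + 1) ∈ AA (k + j') := hnnAA _
    exact hAAle (Nat.le_add_right k j') this
  -- pigeonhole
  obtain ⟨p₀, hp₀⟩ := Finite.exists_infinite_fiber (fun k : ℕ => pp k)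
  have hF : {k : ℕ | pp k = p₀}.Infinite := by
    rw [← Set.infinite_coe_iff]
    exact hp₀
  let E : Set ℕ := (fun k => nn (k+1)) '' {k : ℕ | pp k = p₀}
  have hEM : E ⊆ M := by rintro _ ⟨k, -, rfl⟩; exact hnnM (k+1)
  have hEinf : E.Infinite := hF.image (Set.injOn_of_injective
    (fun a b hab => Nat.succ_injective (hnnmono.injective hab)))
  have hEdiff : ∀ k, (E \ AA (k+1)).Finite := by
    intro k
    have : E \ AA (k+1) ⊆ (fun k => nn (k+1)) '' {j : ℕ | j ≤ k} := by
      rintro _ ⟨⟨j, -, rfl⟩, hnot⟩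
      refine ⟨j, ?_, rfl⟩
      by_contra hj
      exact hnot (hnnin (Nat.succ_lt_succ (Nat.lt_of_not_le hj)))
    exact ((Set.finite_Iic k).image _).subset this
  -- final contradiction
  obtain ⟨f, hfC, hosc⟩ := hP p₀.1 E hEM hEinf
  rcases Bool.dichotomy p₀.2 with hb | hb
  · -- p₀.2 = false : use the < r side
    obtain ⟨n₁, ⟨⟨k, hk, rfl⟩, hlt'⟩⟩ := hosc.1.nonempty
    have hfX : f ∈ XS v r s (pp k).2 (nn (k+1)) := by
      rw [hk, hb]; simpa [XS] using hlt'
    exact hbadk k (E ∩ AA (k+1)) Set.inter_subset_right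
      (hEinf.diff (hEdiff k) |>.mono (fun n hn => ⟨hn.1, by_contra fun h => hn.2 ⟨hn.1, h⟩⟩))
      f ⟨by rw [hk]; exact hfC, hfX⟩ (hosc.inter (hEdiff k))
  · -- p₀.2 = true : use the > s side
    obtain ⟨n₁, ⟨⟨k, hk, rfl⟩, hlt'⟩⟩ := hosc.2.nonempty
    have hfX : f ∈ XS v r s (pp k).2 (nn (k+1)) := by
      rw [hk, hb]; simpa [XS] using hlt'
    exact hbadk k (E ∩ AA (k+1)) Set.inter_subset_right
      (hEinf.diff (hEdiff k) |>.mono (fun n hn => ⟨hn.1, by_contra fun h => hn.2 ⟨hn.1, h⟩⟩))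
      f ⟨by rw [hk]; exact hfC, hfX⟩ (hosc.inter (hEdiff k))

end Multi


section StepZero

variable {D : Type*} {v : ℕ → D → ℝ} {Ball : Set D}

/-- From "every infinite set has an oscillating functional for SOME rational pair" to
"some fixed rational pair works hereditarily on some infinite set". -/
lemma fix_pair
    (HX : ∀ M : Set ℕ, M.Infinite → ∃ f ∈ Ball, ∃ r s : ℚ, (r : ℝ) < s ∧ Osc v r s f M) :
    ∃ (r s : ℚ), (r : ℝ) < s ∧ ∃ M₀ : Set ℕ, M₀.Infinite ∧ Pd v (r : ℝ) (s : ℝ) M₀ Ball := by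
  by_contra hcon
  push_neg at hcon
  obtain ⟨e, hesurj⟩ : ∃ e : ℕ → ℚ × ℚ, Function.Surjective e := exists_surjective_nat _
  have step : ∀ (j : ℕ) (A : Set ℕ), A.Infinite →
      ∃ A' ⊆ A, A'.Infinite ∧ (((e j).1 : ℝ) < ((e j).2 : ℝ) →
        ∀ M'' ⊆ A', M''.Infinite → ∀ f ∈ Ball, ¬ Osc v ((e j).1 : ℝ) ((e j).2 : ℝ) f M'') := by
    intro j A hA
    by_cases hrs : ((e j).1 : ℝ) < ((e j).2 : ℝ)
    · have hnP : ¬ Pd v ((e j).1 : ℝ) ((e j).2 : ℝ) A Ball := hcon _ _ hrs A hA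
      obtain ⟨A', hA', hinf, hbad⟩ := not_Pd hnP
      exact ⟨A', hA', hinf, fun _ => hbad⟩
    · exact ⟨A, subset_rfl, hA, fun h => absurd h hrs⟩
  choose AF hsub hinf hbad using step
  let g : ℕ → {A : Set ℕ // A.Infinite} := fun j =>
    Nat.rec ⟨Set.univ, Set.infinite_univ⟩ (fun j p => ⟨AF j p.1 p.2, hinf j p.1 p.2⟩) j
  have hg : ∀ j, g (j+1) = ⟨AF j (g j).1 (g j).2, hinf j (g j).1 (g j).2⟩ := fun j => rfl
  let G : ℕ → Set ℕ := fun j => (g j).1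
  have hgmono : ∀ j, G (j+1) ⊆ G j := fun j => hsub j (g j).1 (g j).2
  have hgle : ∀ {j k}, k ≤ j → G j ⊆ G k := fun h =>
    antitone_nat_of_succ_le hgmono h
  -- diagonal sequence
  let a : ℕ → ℕ := fun j =>
    Nat.rec ((g 1).2.exists_gt 0).choose
      (fun j prev => (((g (j+2)).2).exists_gt prev).choose) j
  have ha0 : a 0 ∈ (g 1).1 := ((g 1).2.exists_gt 0).choose_spec.1
  have haS : ∀ j, a (j+1) ∈ (g (j+2)).1 ∧ a j < a (j+1) := fun j =>
    ⟨(((g (j+2)).2).exists_gt (a j)).choose_spec.1,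
     (((g (j+2)).2).exists_gt (a j)).choose_spec.2⟩
  have hamem : ∀ j, a j ∈ (g (j+1)).1 := by
    intro j
    cases j with
    | zero => exact ha0
    | succ j => exact (haS j).1
  have hamono : StrictMono a := strictMono_nat_of_lt_succ (fun j => (haS j).2)
  let Minf : Set ℕ := Set.range a
  have hMinf : Minf.Infinite := Set.infinite_range_of_injective hamono.injective
  have hdiff : ∀ j, (Minf \ (g (j+1)).1).Finite := by
    intro j
    have : Minf \ (g (j+1)).1 ⊆ a '' {i | i < j} := by
      rintro _ ⟨⟨i, rfl⟩, hnot⟩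
      refine ⟨i, ?_, rfl⟩
      by_contra hi
      exact hnot (hgle (Nat.succ_le_succ (Nat.le_of_not_lt hi)) (hamem i))
    exact ((Set.finite_Iio j).image _).subset this
  obtain ⟨f, hfB, r, s, hrs, hosc⟩ := HX Minf hMinf
  obtain ⟨j, hej⟩ : ∃ j, e j = (r, s) := hesurj (r, s)
  have hbadj := hbad j (g j).1 (g j).2
  rw [hej] at hbadj
  have hMcap : (Minf ∩ (g (j+1)).1).Infinite :=
    (hMinf.diff (hdiff j)).mono (fun n hn => ⟨hn.1, by_contra fun h => hn.2 ⟨hn.1, h⟩⟩)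
  have : (g (j+1)).1 = AF j (g j).1 (g j).2 := by rw [hg j]
  exact hbadj hrs (Minf ∩ (g (j+1)).1) (by rw [this] at *; exact Set.inter_subset_right)
    hMcap f hfB (hosc.inter (hdiff j))

end StepZero

section Indep

variable {D : Type*} {v : ℕ → D → ℝ} {r s : ℝ} {Ball : Set D}

/-- The cell determined by the first `k` choices. -/
def Cell (v : ℕ → D → ℝ) (r s : ℝ) (Ball : Set D) (k : ℕ) (nf : ℕ → ℕ) (σ : ℕ → Bool) :
    Set D :=
  Ball ∩ ⋂ i ∈ Finset.range k, XS v r s (σ i) (nf i)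

lemma Cell_congr {k : ℕ} {nf : ℕ → ℕ} {σ σ' : ℕ → Bool}
    (h : ∀ i < k, σ i = σ' i) : Cell v r s Ball k nf σ = Cell v r s Ball k nf σ' := by
  unfold Cell
  congr 1
  exact Set.iInter₂_congr fun i hi => by rw [h i (Finset.mem_range.1 hi)]

lemma Cell_succ {k : ℕ} {nf : ℕ → ℕ} {σ : ℕ → Bool} :
    Cell v r s Ball (k+1) nf σ =
      Cell v r s Ball k nf σ ∩ XS v r s (σ k) (nf k) := by
  unfold Cell
  rw [Finset.range_add_one, Finset.set_biInter_insert]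
  ext f
  simp only [Set.mem_inter_iff, Set.mem_iInter]
  tauto

lemma Cell_update {k : ℕ} {nf : ℕ → ℕ} {σ : ℕ → Bool} {n : ℕ} :
    Cell v r s Ball k (Function.update nf k n) σ = Cell v r s Ball k nf σ := by
  unfold Cell
  congr 1
  refine Set.iInter₂_congr fun i hi => ?_
  rw [Function.update_of_ne (Nat.ne_of_lt (Finset.mem_range.1 hi))]

/-- Main independence construction. -/
lemma indep {M₀ : Set ℕ} (hM₀ : M₀.Infinite) (hP0 : Pd v r s M₀ Ball) :
    ∃ n : ℕ → ℕ, StrictMono n ∧ ∀ (k : ℕ) (σ : ℕ → Bool), ∃ f ∈ Ball,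
      ∀ i < k, (σ i = true → s < v (n i) f) ∧ (σ i = false → v (n i) f < r) := by
  classical
  -- invariant
  let Inv : ℕ → (ℕ → ℕ) × Set ℕ → Prop := fun m st =>
    st.2 ⊆ M₀ ∧ st.2.Infinite ∧ (∀ i j, i < j → j < m → st.1 i < st.1 j) ∧
      ∀ σ : ℕ → Bool, Pd v r s st.2 (Cell v r s Ball m st.1 σ)
  have hInv0 : Inv 0 (id, M₀) := by
    refine ⟨subset_rfl, hM₀, fun i j _ hj => absurd hj (Nat.not_lt_zero j), fun σ => ?_⟩
    refine hP0.mono_C ?_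
    intro f hf
    exact ⟨hf, by simp⟩
  have hstep : ∀ (m : ℕ) (st : (ℕ → ℕ) × Set ℕ), Inv m st →
      ∃ st', Inv (m+1) st' ∧ (∀ i < m, st'.1 i = st.1 i) := by
    intro m st hst
    obtain ⟨hsub₀, hinf₀, hmono₀, hPd₀⟩ := hst
    -- apply multicell with cells indexed by Fin m → Bool
    have hmc := multicell (ι := Fin m → Bool)
      (fun τ => Cell v r s Ball m st.1 (fun i => if h : i < m then τ ⟨i, h⟩ else true))
      hinf₀ (fun τ => hPd₀ _) ((Finset.range m).sup (fun i => st.1 i + 1))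
    obtain ⟨n, hnM, hNn, M', hM', hM'inf, hcells⟩ := hmc
    refine ⟨(Function.update st.1 m n, M'), ⟨hM'.trans hsub₀, hM'inf, ?_, ?_⟩, ?_⟩
    · -- strict monotonicity
      intro i j hij hj
      show Function.update st.1 m n i < Function.update st.1 m n j
      rcases Nat.lt_succ_iff_lt_or_eq.1 hj with hj' | rfl
      · rw [Function.update_of_ne (Nat.ne_of_lt (hij.trans hj')),
          Function.update_of_ne (Nat.ne_of_lt hj')]
        exact hmono₀ i j hij hj'
      · rw [Function.update_of_ne (Nat.ne_of_lt hij), Function.update_self]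
        calc st.1 i < st.1 i + 1 := Nat.lt_succ_self _
        _ ≤ (Finset.range j).sup (fun i => st.1 i + 1) :=
            Finset.le_sup (f := fun i => st.1 i + 1) (Finset.mem_range.2 hij)
        _ ≤ n := hNn
    · -- the Pd invariant for all cells at level m+1
      intro σ
      have key := hcells (fun i : Fin m => σ i) (σ m)
      have hEq : Cell v r s Ball (m+1) (Function.update st.1 m n) σ =
          (Cell v r s Ball m st.1 (fun i => if h : i < m then σ i else true)) ∩
            XS v r s (σ m) n := by
        rw [Cell_succ, Function.update_self]
        congr 1
        rw [Cell_update]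
        exact Cell_congr (fun i hi => by simp [hi])
      rw [hEq]
      exact key
    · intro i hi
      exact Function.update_of_ne (Nat.ne_of_lt hi) _ _
  choose stepF hInvS hstab using hstep
  -- iterate
  let g : ∀ m : ℕ, {st : (ℕ → ℕ) × Set ℕ // Inv m st} := fun m =>
    Nat.rec ⟨(id, M₀), hInv0⟩ (fun m p => ⟨stepF m p.1 p.2, hInvS m p.1 p.2⟩) m
  have hgS : ∀ m, (g (m+1)).1 = stepF m (g m).1 (g m).2 := fun m => rfl
  have hstable : ∀ m i, i < m → (g m).1.1 i = (g (i+1)).1.1 i := by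
    intro m
    induction m with
    | zero => intro i hi; exact absurd hi (Nat.not_lt_zero i)
    | succ m ih =>
      intro i hi
      rcases Nat.lt_succ_iff_lt_or_eq.1 hi with hi' | rfl
      · rw [hgS m, hstab m (g m).1 (g m).2 i hi']
        exact ih i hi'
      · rfl
  set n : ℕ → ℕ := fun i => (g (i+1)).1.1 i with hn
  have hmono : StrictMono n := by
    intro i j hij
    have h1 : n i = (g (j+1)).1.1 i := (hstable (j+1) i (hij.trans (Nat.lt_succ_self j))).symm
    have h2 : n j = (g (j+1)).1.1 j := rfl
    rw [h1, h2]
    exact (g (j+1)).2.2.2.1 i j hij (Nat.lt_succ_self j)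
  refine ⟨n, hmono, ?_⟩
  intro k σ
  obtain ⟨f, hf, hosc⟩ := (g k).2.2.2.2 σ (g k).1.2 subset_rfl (g k).2.2.1
  refine ⟨f, hf.1, ?_⟩
  intro i hi
  have hfX : f ∈ XS v r s (σ i) ((g k).1.1 i) := by
    have := hf.2
    simp only [Set.mem_iInter] at this
    exact this i (Finset.mem_range.2 hi)
  rw [hstable k i hi] at hfX
  constructor
  · intro hσ; rw [hσ] at hfX; simpa [XS] using hfX
  · intro hσ; rw [hσ] at hfX; simpa [XS] using hfX

end Indep

section Rosenthal

variable {X : Type*} [NormedAddCommGroup X] [NormedSpace ℝ X]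

/-- Rosenthal-type extraction: a bounded sequence all whose subsequences oscillate weakly
has a subsequence with a lower ℓ¹ estimate. -/
lemma rosenthal_extract {x : ℕ → X}
    (HX : ∀ M : Set ℕ, M.Infinite → ∃ f : X →L[ℝ] ℝ, ‖f‖ ≤ 1 ∧
      ∃ r s : ℚ, (r : ℝ) < s ∧ Osc (fun n f => f (x n)) (r : ℝ) (s : ℝ) f M) :
    ∃ δ : ℝ, 0 < δ ∧ ∃ φ : ℕ → ℕ, StrictMono φ ∧ ∀ (k : ℕ) (a : ℕ → ℝ),
      δ * ∑ i ∈ Finset.range k, |a i| ≤ ‖∑ i ∈ Finset.range k, a i • x (φ i)‖ := by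
  classical
  set v : ℕ → (X →L[ℝ] ℝ) → ℝ := fun n f => f (x n) with hv
  set Ball : Set (X →L[ℝ] ℝ) := {f | ‖f‖ ≤ 1} with hBall
  have HX' : ∀ M : Set ℕ, M.Infinite → ∃ f ∈ Ball, ∃ r s : ℚ, (r : ℝ) < s ∧
      Osc v (r : ℝ) (s : ℝ) f M := by
    intro M hM
    obtain ⟨f, hf, r, s, hrs, hosc⟩ := HX M hM
    exact ⟨f, hf, r, s, hrs, hosc⟩
  obtain ⟨r, s, hrs, M₀, hM₀, hP0⟩ := fix_pair HX'
  obtain ⟨φ, hφ, hind⟩ := indep hM₀ hP0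
  refine ⟨(s - r) / 2, by linarith, φ, hφ, ?_⟩
  intro k a
  set σ : ℕ → Bool := fun i => decide (0 ≤ a i) with hσ
  obtain ⟨f₁, hf₁B, hf₁⟩ := hind k σ
  obtain ⟨f₂, hf₂B, hf₂⟩ := hind k (fun i => !σ i)
  set y : X := ∑ i ∈ Finset.range k, a i • x (φ i) with hy
  have key : ∀ i ∈ Finset.range k,
      ((s : ℝ) - r) * |a i| ≤ a i * (f₁ (x (φ i)) - f₂ (x (φ i))) := by
    intro i hi
    have hik := Finset.mem_range.1 hi
    rcases le_or_gt 0 (a i) with hai | hai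
    · have h1 : (s : ℝ) < f₁ (x (φ i)) := (hf₁ i hik).1 (by simp [hσ, hai])
      have h2 : f₂ (x (φ i)) < r := (hf₂ i hik).2 (by simp [hσ, hai])
      rw [abs_of_nonneg hai]
      have : ((s : ℝ) - r) ≤ f₁ (x (φ i)) - f₂ (x (φ i)) := by linarith
      calc ((s : ℝ) - r) * a i ≤ (f₁ (x (φ i)) - f₂ (x (φ i))) * a i :=
            mul_le_mul_of_nonneg_right this hai
        _ = a i * (f₁ (x (φ i)) - f₂ (x (φ i))) := mul_comm _ _
    · have h1 : f₁ (x (φ i)) < r := (hf₁ i hik).2 (by simp [hσ, not_le.2 hai])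
      have h2 : (s : ℝ) < f₂ (x (φ i)) := (hf₂ i hik).1 (by simp [hσ, not_le.2 hai])
      rw [abs_of_neg hai]
      nlinarith
  have hsum : ((s : ℝ) - r) * ∑ i ∈ Finset.range k, |a i| ≤ f₁ y - f₂ y := by
    rw [hy, map_sum, map_sum, Finset.mul_sum, ← Finset.sum_sub_distrib]
    refine Finset.sum_le_sum ?_
    intro i hi
    simpa [map_smul, smul_eq_mul, mul_sub] using key i hi
  have hfy : ∀ (f : X →L[ℝ] ℝ), ‖f‖ ≤ 1 → |f y| ≤ ‖y‖ := by
    intro f hf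
    calc |f y| ≤ ‖f‖ * ‖y‖ := f.le_opNorm y
      _ ≤ 1 * ‖y‖ := mul_le_mul_of_nonneg_right hf (norm_nonneg _)
      _ = ‖y‖ := one_mul _
  have h1 := hfy f₁ hf₁B
  have h2 := hfy f₂ hf₂B
  have : f₁ y - f₂ y ≤ 2 * ‖y‖ := by
    have := abs_le.1 h1
    have := abs_le.1 h2
    linarith [(abs_le.1 h1).2, (abs_le.1 h2).1]
  linarith

end Rosenthal

section Embed
open scoped ENNReal

/-- The Banach space ℓ¹ of absolutely summable real sequences. -/
abbrev EllOne' : Type := lp (fun _ : ℕ => ℝ) 1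

variable {X : Type*} [NormedAddCommGroup X] [NormedSpace ℝ X] [CompleteSpace X]

lemma ellone_embed (X₀ : Subspace ℝ X) (hcl : IsClosed (X₀ : Set X)) (y : ℕ → X)
    (hy_mem : ∀ i, y i ∈ X₀) (hy_norm : ∀ i, ‖y i‖ ≤ 1) {δ : ℝ} (hδ : 0 < δ)
    (hbound : ∀ (k : ℕ) (a : ℕ → ℝ),
      δ * ∑ i ∈ Finset.range k, |a i| ≤ ‖∑ i ∈ Finset.range k, a i • y i‖) :
    ∃ Z : Subspace ℝ X, Z ≤ X₀ ∧ IsClosed (Z : Set X) ∧ Nonempty (Z ≃L[ℝ] EllOne') := by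
  have honereal : (0:ℝ) < (1 : ℝ≥0∞).toReal := by norm_num
  have hsumnorm : ∀ a : EllOne', Summable (fun i => ‖a i‖) := by
    intro a
    have := (lp.memℓp a).summable honereal
    simpa using this
  have hnorm_eq : ∀ a : EllOne', ‖a‖ = ∑' i, ‖a i‖ := by
    intro a
    rw [lp.norm_eq_tsum_rpow honereal a]
    simp
  have hsumnorm2 : ∀ a : EllOne', Summable (fun i => ‖a i • y i‖) := by
    intro a
    refine (hsumnorm a).of_nonneg_of_le (fun i => norm_nonneg _) (fun i => ?_)
    rw [norm_smul]
    calc ‖a i‖ * ‖y i‖ ≤ ‖a i‖ * 1 :=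
          mul_le_mul_of_nonneg_left (hy_norm i) (norm_nonneg _)
      _ = ‖a i‖ := mul_one _
  have hsummable : ∀ a : EllOne', Summable (fun i => a i • y i) := fun a =>
    Summable.of_norm (hsumnorm2 a)
  classical
  let Tlin : EllOne' →ₗ[ℝ] X :=
    { toFun := fun a => ∑' i, a i • y i
      map_add' := by
        intro a b
        have : ∀ i, ((a + b : EllOne') i) • y i = a i • y i + b i • y i := by
          intro i
          rw [lp.coeFn_add, Pi.add_apply, add_smul]
        exact (tsum_congr this).trans (Summable.tsum_add (hsummable a) (hsummable b))
      map_smul' := by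
        intro c a
        have : ∀ i, ((c • a : EllOne') i) • y i = c • (a i • y i) := by
          intro i
          rw [lp.coeFn_smul, Pi.smul_apply, smul_assoc]
        exact (tsum_congr this).trans (Summable.tsum_const_smul _ (hsummable a)) }
  have hTbound : ∀ a : EllOne', ‖Tlin a‖ ≤ 1 * ‖a‖ := by
    intro a
    rw [one_mul, hnorm_eq a]
    calc ‖∑' i, a i • y i‖ ≤ ∑' i, ‖a i • y i‖ := norm_tsum_le_tsum_norm (hsumnorm2 a)
      _ ≤ ∑' i, ‖a i‖ := by
          refine Summable.tsum_le_tsum (fun i => ?_) (hsumnorm2 a) (hsumnorm a)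
          rw [norm_smul]
          calc ‖a i‖ * ‖y i‖ ≤ ‖a i‖ * 1 :=
                mul_le_mul_of_nonneg_left (hy_norm i) (norm_nonneg _)
            _ = ‖a i‖ := mul_one _
  let T : EllOne' →L[ℝ] X := Tlin.mkContinuous 1 hTbound
  have hTapp : ∀ a : EllOne', T a = ∑' i, a i • y i := fun a => rfl
  -- lower bound
  have hlow : ∀ a : EllOne', δ * ‖a‖ ≤ ‖T a‖ := by
    intro a
    have hpart : Tendsto (fun k => ∑ i ∈ Finset.range k, a i • y i) atTop (𝓝 (T a)) := by
      rw [hTapp]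
      exact (hsummable a).hasSum.tendsto_sum_nat
    have t1 : Tendsto (fun k => ‖∑ i ∈ Finset.range k, a i • y i‖) atTop (𝓝 ‖T a‖) :=
      hpart.norm
    have t2 : Tendsto (fun k => δ * ∑ i ∈ Finset.range k, |a i|) atTop (𝓝 (δ * ‖a‖)) := by
      have := (hsumnorm a).hasSum.tendsto_sum_nat
      rw [hnorm_eq a]
      have h2 := this.const_mul δ
      simpa [Real.norm_eq_abs] using h2
    exact le_of_tendsto_of_tendsto' t2 t1 (fun k => hbound k (fun i => a i))
  -- membership in X₀
  have hmem : ∀ a : EllOne', T a ∈ X₀ := by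
    intro a
    have hpart : Tendsto (fun k => ∑ i ∈ Finset.range k, a i • y i) atTop (𝓝 (T a)) := by
      rw [hTapp]
      exact (hsummable a).hasSum.tendsto_sum_nat
    refine hcl.mem_of_tendsto hpart (Filter.Eventually.of_forall (fun k => ?_))
    exact Submodule.sum_mem _ (fun i _ => Submodule.smul_mem _ _ (hy_mem i))
  -- antilipschitz
  have hanti : AntilipschitzWith (Real.toNNReal δ⁻¹) T := by
    refine T.antilipschitz_of_bound (fun a => ?_)
    have h := hlow a
    rw [Real.coe_toNNReal _ (le_of_lt (inv_pos.2 hδ))]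
    rw [inv_mul_eq_div, le_div_iff₀ hδ]
    linarith [hlow a]
  have hinj : Function.Injective T := hanti.injective
  -- the subspace
  refine ⟨LinearMap.range T.toLinearMap, ?_, ?_, ?_⟩
  · rintro z ⟨a, rfl⟩
    exact hmem a
  · have : (LinearMap.range T.toLinearMap : Set X) = Set.range T := by
      ext z; simp [LinearMap.mem_range]
    rw [this]
    exact hanti.isClosed_range T.uniformContinuous
  · have hZclosed : IsClosed ((LinearMap.range T.toLinearMap : Submodule ℝ X) : Set X) := by
      have : (LinearMap.range T.toLinearMap : Set X) = Set.range T := by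
        ext z; simp [LinearMap.mem_range]
      rw [this]
      exact hanti.isClosed_range T.uniformContinuous
    haveI : CompleteSpace (LinearMap.range T.toLinearMap : Submodule ℝ X) := hZclosed.completeSpace_coe
    let Tr : EllOne' →L[ℝ] (LinearMap.range T.toLinearMap : Submodule ℝ X) :=
      T.codRestrict _ (fun a => LinearMap.mem_range_self _ a)
    have hinjTr : Function.Injective Tr := by
      intro a b hab
      apply hinj
      have : (Tr a : X) = (Tr b : X) := by rw [hab]
      simpa [Tr] using this
    have hker : LinearMap.ker Tr.toLinearMap = ⊥ := LinearMap.ker_eq_bot.2 hinjTr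
    have hsurjTr : Function.Surjective Tr := by
      rintro ⟨z, a, rfl⟩
      exact ⟨a, rfl⟩
    have hrange : LinearMap.range Tr.toLinearMap = ⊤ := LinearMap.range_eq_top.2 hsurjTr
    exact ⟨(ContinuousLinearEquiv.ofBijective Tr hker hrange).symm⟩

end Embed

section Final

variable {X : Type*} [NormedAddCommGroup X] [NormedSpace ℝ X]

/-- In a Schur space, a bounded separated sequence satisfies the oscillation hypothesis. -/
lemma schur_oscillation
    (hX : ∀ (x : ℕ → X) (x₀ : X), (∀ f : X →L[ℝ] ℝ,
        Tendsto (fun n => f (x n)) atTop (𝓝 (f x₀))) → Tendsto x atTop (𝓝 x₀))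
    {x : ℕ → X} {ε : ℝ} (hε : 0 < ε) (hxn : ∀ n, ‖x n‖ ≤ 1)
    (hsep : ∀ m n, m ≠ n → ε ≤ ‖x m - x n‖) :
    ∀ M : Set ℕ, M.Infinite → ∃ f : X →L[ℝ] ℝ, ‖f‖ ≤ 1 ∧
      ∃ r s : ℚ, (r : ℝ) < s ∧ Osc (fun n f => f (x n)) (r : ℝ) (s : ℝ) f M := by
  intro M hM
  have hMi : (setOf fun n => n ∈ M).Infinite := hM
  set e : ℕ → ℕ := Nat.nth (fun n => n ∈ M) with he
  have he_mem : ∀ k, e k ∈ M := fun k => Nat.nth_mem_of_infinite hMi k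
  have he_sm : StrictMono e := Nat.nth_strictMono hMi
  -- no weak Cauchy subsequence
  have hnc : ∃ f : X →L[ℝ] ℝ, ¬∃ L : ℝ, Tendsto (fun k => f (x (e k))) atTop (𝓝 L) := by
    by_contra hcon
    push_neg at hcon
    choose L hL using hcon
    set z : ℕ → X := fun k => x (e (2*k+1)) - x (e (2*k)) with hz
    have hodd : StrictMono (fun k : ℕ => 2*k+1) := by
      intro a b hab; dsimp only; omega
    have heven : StrictMono (fun k : ℕ => 2*k) := by
      intro a b hab; dsimp only; omega
    have hweak : ∀ f : X →L[ℝ] ℝ, Tendsto (fun k => f (z k)) atTop (𝓝 (f 0)) := by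
      intro f
      have h1 : Tendsto (fun k => f (x (e (2*k+1)))) atTop (𝓝 (L f)) :=
        (hL f).comp (hodd.tendsto_atTop)
      have h2 : Tendsto (fun k => f (x (e (2*k)))) atTop (𝓝 (L f)) :=
        (hL f).comp (heven.tendsto_atTop)
      have := h1.sub h2
      rw [sub_self] at this
      rw [map_zero]
      refine this.congr (fun k => ?_)
      rw [hz]
      simp [map_sub]
    have hnorm := (hX z 0 hweak).norm
    rw [norm_zero] at hnorm
    have hev : ∀ᶠ k in atTop, ‖z k‖ < ε := hnorm.eventually_lt_const hε
    obtain ⟨k, hk⟩ := hev.exists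
    have : ε ≤ ‖z k‖ := hsep _ _ (he_sm.injective.ne (by omega))
    linarith
  obtain ⟨f, hf⟩ := hnc
  have hf0 : f ≠ 0 := by
    rintro rfl
    exact hf ⟨0, by simpa using tendsto_const_nhds⟩
  have hfn : ‖f‖ ≠ 0 := norm_ne_zero_iff.2 hf0
  set g : X →L[ℝ] ℝ := ‖f‖⁻¹ • f with hg
  have hgnorm : ‖g‖ ≤ 1 := by
    rw [hg]
    have := ContinuousLinearMap.opNorm_smul_le (‖f‖⁻¹) f
    rw [Real.norm_eq_abs, abs_inv, abs_norm, inv_mul_cancel₀ hfn] at this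
    exact this
  have hgnc : ¬∃ L : ℝ, Tendsto (fun k => g (x (e k))) atTop (𝓝 L) := by
    rintro ⟨L, hL⟩
    refine hf ⟨‖f‖ * L, ?_⟩
    have := hL.const_mul ‖f‖
    refine this.congr (fun k => ?_)
    rw [hg]
    simp only [ContinuousLinearMap.smul_apply, smul_eq_mul]
    rw [← mul_assoc, mul_inv_cancel₀ hfn, one_mul]
  set t : ℕ → ℝ := fun k => g (x (e k)) with ht
  have htb : ∀ k, |t k| ≤ 1 := by
    intro k
    calc |t k| ≤ ‖g‖ * ‖x (e k)‖ := g.le_opNorm _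
      _ ≤ 1 * 1 := by
          exact mul_le_mul hgnorm (hxn _) (norm_nonneg _) (le_trans (norm_nonneg _) hgnorm)
      _ = 1 := one_mul _
  have hba : IsBoundedUnder (· ≤ ·) atTop t :=
    ⟨1, Filter.eventually_map.2 (Filter.Eventually.of_forall (fun k => (abs_le.1 (htb k)).2))⟩
  have hbb : IsBoundedUnder (· ≥ ·) atTop t :=
    ⟨-1, Filter.eventually_map.2 (Filter.Eventually.of_forall (fun k => (abs_le.1 (htb k)).1))⟩
  have hne : liminf t atTop ≠ limsup t atTop := by
    intro heq
    exact hgnc ⟨limsup t atTop, tendsto_of_liminf_eq_limsup heq rfl hba hbb⟩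
  have hlt : liminf t atTop < limsup t atTop :=
    lt_of_le_of_ne (liminf_le_limsup hba hbb) hne
  obtain ⟨r, hr1, hr2⟩ := exists_rat_btwn hlt
  obtain ⟨s, hs1, hs2⟩ := exists_rat_btwn hr2
  refine ⟨g, hgnorm, r, s, ?_, ?_, ?_⟩
  · exact_mod_cast hs1
  · -- infinitely many t k < r
    have hfreq : ∃ᶠ k in atTop, t k < r :=
      frequently_lt_of_liminf_lt hba.isCoboundedUnder_ge hr1
    have hinf : {k : ℕ | t k < r}.Infinite := Nat.frequently_atTop_iff_infinite.1 hfreq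
    have : e '' {k : ℕ | t k < r} ⊆ {n ∈ M | g (x n) < r} := by
      rintro _ ⟨k, hk, rfl⟩
      exact ⟨he_mem k, hk⟩
    exact (hinf.image (Set.injOn_of_injective he_sm.injective)).mono this
  · have hfreq : ∃ᶠ k in atTop, (s : ℝ) < t k :=
      frequently_lt_of_lt_limsup hbb.isCoboundedUnder_le hs2
    have hinf : {k : ℕ | (s : ℝ) < t k}.Infinite := Nat.frequently_atTop_iff_infinite.1 hfreq
    have : e '' {k : ℕ | (s : ℝ) < t k} ⊆ {n ∈ M | (s : ℝ) < g (x n)} := by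
      rintro _ ⟨k, hk, rfl⟩
      exact ⟨he_mem k, hk⟩
    exact (hinf.image (Set.injOn_of_injective he_sm.injective)).mono this

end Final

/-- Every Banach space with the Schur property is hereditarily-ℓ¹. -/

theorem stmt18 (X : Type*) [NormedAddCommGroup X] [NormedSpace ℝ X] [CompleteSpace X]
    (hX : SchurProperty X) : HereditarilyEllOne X := by
  intro X₀ hclosed hfd
  obtain ⟨R, u, hR, hunorm, husep⟩ :=
    exists_seq_norm_le_one_le_norm_sub (𝕜 := ℝ) (E := X₀) hfd
  have hRpos : (0:ℝ) < R := lt_trans one_pos hR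
  have hRinvpos : (0:ℝ) < R⁻¹ := inv_pos.2 hRpos
  set x : ℕ → X := fun n => R⁻¹ • ((u n : X)) with hx
  have hcoenorm : ∀ z : X₀, ‖(z : X)‖ = ‖z‖ := fun z => rfl
  have hxnorm : ∀ n, ‖x n‖ ≤ 1 := by
    intro n
    rw [hx]
    calc ‖R⁻¹ • ((u n : X))‖ = ‖R⁻¹‖ * ‖(u n : X)‖ := norm_smul _ _
      _ = R⁻¹ * ‖u n‖ := by rw [Real.norm_eq_abs, abs_of_pos hRinvpos, hcoenorm]
      _ ≤ R⁻¹ * R := mul_le_mul_of_nonneg_left (hunorm n) (le_of_lt hRinvpos)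
      _ = 1 := inv_mul_cancel₀ (ne_of_gt hRpos)
  have hxsep : ∀ m n, m ≠ n → R⁻¹ ≤ ‖x m - x n‖ := by
    intro m n hmn
    rw [hx]
    have h1 : R⁻¹ • ((u m : X)) - R⁻¹ • ((u n : X)) = R⁻¹ • (((u m - u n : X₀) : X)) := by
      rw [← smul_sub]
      norm_cast
    rw [h1]
    calc R⁻¹ = R⁻¹ * 1 := (mul_one _).symm
      _ ≤ R⁻¹ * ‖u m - u n‖ := mul_le_mul_of_nonneg_left (husep hmn) (le_of_lt hRinvpos)
      _ = ‖R⁻¹ • (((u m - u n : X₀) : X))‖ := by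
          rw [norm_smul, Real.norm_eq_abs, abs_of_pos hRinvpos, hcoenorm]
  have hmem : ∀ n, x n ∈ X₀ := fun n => X₀.smul_mem _ (u n).2
  have HX := schur_oscillation (fun z z₀ h => hX z z₀ h) hRinvpos hxnorm hxsep
  obtain ⟨δ, hδ, φ, hφ, hbound⟩ := rosenthal_extract HX
  exact ellone_embed X₀ hclosed (fun i => x (φ i)) (fun i => hmem _) (fun i => hxnorm _)
    hδ (fun k a => hbound k a)
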